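/- For every positive integer N ≥ 3 and every 1 ≤ k ≤ N-1, the quantity ((N-2k)/(N-k-1))·C(N-3,k-1) is an integer. -/
import Mathlib


/-- For `N ≥ 3` and `1 ≤ k ≤ N-2`, the cubic anomaly coefficient
`C₃ = ((N-2k)/(N-k-1))·C(N-3,k-1)` of the rank-`k` antisymmetric tensor
representation of `SU(N)` is an integer. -/
theorem su_antisymmetric_cubic_anomaly_is_integer (N k : ℕ) (hN : 3 ≤ N)
    (hk1 : 1 ≤ k) (hk2 : k ≤ N - 2) :
    ∃ m : ℤ, ((N : ℚ) - 2 * k) / ((N : ℚ) - k - 1) * ((N - 3).choose (k - 1) : ℚ)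
      = (m : ℚ) := by
  have hkN : k + 2 ≤ N := by omega
  have hd : ((N : ℚ) - k - 1) ≠ 0 := by
    have : (k : ℚ) + 2 ≤ N := by exact_mod_cast hkN
    intro h; linarith
  rcases eq_or_lt_of_le hk1 with h1 | h2
  · refine ⟨1, ?_⟩
    rw [← h1]
    simp only [Nat.sub_self, Nat.choose_zero_right, Nat.cast_one, mul_one, Int.cast_one,
      Nat.cast_one]
    rw [div_eq_one_iff_eq]
    · ring
    · simpa [← h1] using hd
  · have key : (N - 3).choose (k - 1) * (k - 1) = (N - 3).choose (k - 2) * (N - k - 1) := by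
      have h := Nat.choose_succ_right_eq (N - 3) (k - 2)
      have e1 : k - 2 + 1 = k - 1 := by omega
      have e2 : N - 3 - (k - 2) = N - k - 1 := by omega
      rw [e1, e2] at h
      exact h
    have c1 : ((k - 1 : ℕ) : ℚ) = (k : ℚ) - 1 := by
      rw [Nat.cast_sub hk1]; simp
    have c2 : ((N - k - 1 : ℕ) : ℚ) = (N : ℚ) - k - 1 := by
      rw [Nat.cast_sub (by omega : 1 ≤ N - k), Nat.cast_sub (by omega : k ≤ N)]
      simp
    have keyQ : ((N - 3).choose (k - 1) : ℚ) * ((k : ℚ) - 1)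
        = ((N - 3).choose (k - 2) : ℚ) * ((N : ℚ) - k - 1) := by
      rw [← c1, ← c2]
      exact_mod_cast key
    refine ⟨((N - 3).choose (k - 1) : ℤ) - ((N - 3).choose (k - 2) : ℤ), ?_⟩
    rw [div_mul_eq_mul_div, div_eq_iff hd]
    push_cast
    linear_combination -keyQ
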